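/- Let (Ω, μ) be a probability space and let υ : ℤ → Ω → ℝ be a family of square-integrable random variables with E[υ(k)] = 0, E[υ(k)²] = 1, and E[υ(k)·υ(j)] = 0 for k ≠ j. Let M be a positive integer, let h_1, …, h_M : ℤ → ℝ be finitely supported filters, and let I : ℤ → {1,…,M} be an arbitrary (periodic) interval-selection function. Define ε_i(n) := Σ_{l ∈ ℤ} h_i(n − l)·υ(l) (a finite sum) and the noise process w(n) := ε_{I(n)}(n). Then for all n, l ∈ ℤ the autocorrelation of w satisfies E[w(n+l)·w(n)] = Σ_{m ∈ ℤ} h_{I(n+l)}(m) · h_{I(n)}(m − l). -/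

import Mathlib

open MeasureTheory

set_option autoImplicit false

private lemma int_mul_of_L2 {Ω : Type*} [MeasurableSpace Ω] {μ : Measure Ω}
    {f g : Ω → ℝ} (hf : MemLp f 2 μ) (hg : MemLp g 2 μ) :
    Integrable (fun ω => f ω * g ω) μ := by
  apply Integrable.mono' ((hf.integrable_sq.add hg.integrable_sq).div_const 2)
    (hf.aestronglyMeasurable.mul hg.aestronglyMeasurable)
  filter_upwards with ω
  have h1 : (|f ω| - |g ω|)^2 ≥ 0 := sq_nonneg _
  simp only [Pi.mul_apply, Pi.add_apply, Real.norm_eq_abs, abs_mul]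
  nlinarith [sq_abs (f ω), sq_abs (g ω)]

theorem nassar_noise_autocorrelation
    {Ω : Type*} [MeasurableSpace Ω] (μ : Measure Ω) [IsProbabilityMeasure μ]
    (υ : ℤ → Ω → ℝ)
    (hL2 : ∀ k : ℤ, MemLp (υ k) 2 μ)
    (hmean : ∀ k : ℤ, ∫ ω, υ k ω ∂μ = 0)
    (hvar : ∀ k : ℤ, ∫ ω, (υ k ω) ^ 2 ∂μ = 1)
    (huncorr : ∀ k j : ℤ, k ≠ j → ∫ ω, υ k ω * υ j ω ∂μ = 0)
    (M : ℕ) (hM : 0 < M)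
    (h : ℕ → ℤ → ℝ)
    (hsupp : ∀ i : ℕ, (Function.support (h i)).Finite)
    (I : ℤ → ℕ) (hI : ∀ n : ℤ, 1 ≤ I n ∧ I n ≤ M)
    (w : ℤ → Ω → ℝ)
    (hw : ∀ (n : ℤ) (ω : Ω), w n ω = ∑ᶠ l : ℤ, h (I n) (n - l) * υ l ω) :
    ∀ n l : ℤ,
      ∫ ω, w (n + l) ω * w n ω ∂μ
        = ∑ᶠ m : ℤ, h (I (n + l)) m * h (I n) (m - l) := by
  classical
  intro n l
  set i1 := I (n + l) with hi1
  set i2 := I n with hi2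
  set T1 : Finset ℤ := (hsupp i1).toFinset.image (fun s => n + l - s) with hT1
  set T2 : Finset ℤ := (hsupp i2).toFinset.image (fun s => n - s) with hT2
  set T : Finset ℤ := T1 ∪ T2 with hT
  -- rewrite w in terms of finite sums over T
  have key1 : ∀ ω, w (n + l) ω = ∑ a ∈ T, h i1 (n + l - a) * υ a ω := by
    intro ω
    rw [hw]
    apply finsum_eq_finset_sum_of_support_subset
    intro k hk
    have hne : h i1 (n + l - k) ≠ 0 := left_ne_zero_of_mul hk
    have : n + l - k ∈ (hsupp i1).toFinset := by
      simp [Function.mem_support, hne]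
    refine Finset.mem_coe.2 (Finset.mem_union_left _ ?_)
    refine Finset.mem_image.2 ⟨n + l - k, this, by omega⟩
  have key2 : ∀ ω, w n ω = ∑ b ∈ T, h i2 (n - b) * υ b ω := by
    intro ω
    rw [hw]
    apply finsum_eq_finset_sum_of_support_subset
    intro k hk
    have hne : h i2 (n - k) ≠ 0 := left_ne_zero_of_mul hk
    have : n - k ∈ (hsupp i2).toFinset := by
      simp [Function.mem_support, hne]
    refine Finset.mem_coe.2 (Finset.mem_union_right _ ?_)
    refine Finset.mem_image.2 ⟨n - k, this, by omega⟩
  have hdelta : ∀ a b : ℤ, ∫ ω, υ a ω * υ b ω ∂μ = if a = b then 1 else 0 := by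
    intro a b
    by_cases hab : a = b
    · subst hab
      simp only [if_pos rfl]
      rw [← hvar a]
      congr 1; funext ω; ring
    · rw [if_neg hab]; exact huncorr a b hab
  have hexp : ∫ ω, w (n + l) ω * w n ω ∂μ
      = ∑ a ∈ T, ∑ b ∈ T, h i1 (n + l - a) * h i2 (n - b) * ∫ ω, υ a ω * υ b ω ∂μ := by
    have : (fun ω => w (n + l) ω * w n ω)
        = fun ω => ∑ a ∈ T, ∑ b ∈ T, h i1 (n + l - a) * h i2 (n - b) * (υ a ω * υ b ω) := by
      funext ω
      rw [key1 ω, key2 ω, Finset.sum_mul_sum]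
      apply Finset.sum_congr rfl; intro a _
      apply Finset.sum_congr rfl; intro b _
      ring
    rw [this]
    rw [integral_finset_sum]
    · apply Finset.sum_congr rfl; intro a _
      rw [integral_finset_sum]
      · apply Finset.sum_congr rfl; intro b _
        rw [integral_const_mul]
      · intro b _
        exact ((int_mul_of_L2 (hL2 a) (hL2 b)).const_mul _)
    · intro a _
      apply integrable_finset_sum
      intro b _
      exact ((int_mul_of_L2 (hL2 a) (hL2 b)).const_mul _)
  rw [hexp]
  have hdiag : ∑ a ∈ T, ∑ b ∈ T, h i1 (n + l - a) * h i2 (n - b) * ∫ ω, υ a ω * υ b ω ∂μ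
      = ∑ a ∈ T, h i1 (n + l - a) * h i2 (n - a) := by
    apply Finset.sum_congr rfl; intro a ha
    rw [Finset.sum_eq_single a]
    · rw [hdelta a a, if_pos rfl, mul_one]
    · intro b _ hb
      rw [hdelta a b, if_neg (fun e => hb e.symm), mul_zero]
    · intro hna; exact absurd ha hna
  rw [hdiag]
  -- now identify RHS finsum
  have hrhs : ∑ᶠ m : ℤ, h i1 m * h i2 (m - l)
      = ∑ m ∈ T.image (fun a => n + l - a), h i1 m * h i2 (m - l) := by
    apply finsum_eq_finset_sum_of_support_subset
    intro m hm
    have hne : h i1 m ≠ 0 := left_ne_zero_of_mul hm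
    have hmem : m ∈ (hsupp i1).toFinset := by simp [Function.mem_support, hne]
    refine Finset.mem_coe.2 (Finset.mem_image.2 ⟨n + l - m, ?_, by omega⟩)
    exact Finset.mem_union_left _ (Finset.mem_image.2 ⟨m, hmem, rfl⟩)
  rw [hrhs, Finset.sum_image (by intro x _ y _ hxy; simp only at hxy; omega)]
  apply Finset.sum_congr rfl
  intro a _
  congr 1
  congr 1
  omega
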